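/- (q-vague convergence of the SIC prior to a flat prior as ε → 0.) Fix σ > 0 and λ > 0, and let (ε_n) be a sequence of positive reals with ε_n → 0. For each n let π_n be the measure on ℝ with Lebesgue density β ↦ exp(−(λ/(2σ²))·β²/(β² + ε_n²)). Then there exist positive reals a_n such that for every continuous real-valued function f on ℝ with compact support, a_n·∫_ℝ f(β)·exp(−(λ/(2σ²))·β²/(β² + ε_n²)) dβ → ∫_ℝ f(β) dβ as n → ∞; that is, π_n converges q-vaguely to Lebesgue measure (the flat prior). -/

import Mathlib

open Filter MeasureTheory

/-- **q-vague convergence of the SIC prior to a flat prior as ε → 0.**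
With `σ, lam > 0` fixed and `ε_n → 0` (each `ε_n > 0`), there are positive scalars
`a_n` such that for every continuous compactly supported `f`,
`a_n ∫ f(β) exp(−(lam/(2σ²)) β²/(β² + ε_n²)) dβ → ∫ f(β) dβ`. -/
theorem sic_prior_qvague_flat (σ lam : ℝ) (hσ : 0 < σ) (hlam : 0 < lam)
    (ε : ℕ → ℝ) (hε_pos : ∀ n, 0 < ε n)
    (hε : Tendsto ε atTop (nhds 0)) :
    ∃ a : ℕ → ℝ, (∀ n, 0 < a n) ∧
      ∀ f : ℝ → ℝ, Continuous f → HasCompactSupport f →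
        Tendsto (fun n =>
            a n * ∫ β : ℝ, f β * Real.exp (-(lam / (2 * σ ^ 2)) * (β ^ 2 / (β ^ 2 + (ε n) ^ 2))))
          atTop (nhds (∫ β : ℝ, f β)) := by
  set c := lam / (2 * σ ^ 2) with hc
  have hcpos : 0 < c := by positivity
  refine ⟨fun _ => Real.exp c, fun _ => Real.exp_pos c, ?_⟩
  intro f hf hsupp
  have hint : Integrable (fun β : ℝ => Real.exp c * |f β|) := by
    exact ((hf.abs.integrable_of_hasCompactSupport hsupp.abs).const_mul _)
  have key : Tendsto
      (fun n => ∫ β : ℝ, Real.exp c * (f β * Real.exp (-c * (β ^ 2 / (β ^ 2 + (ε n) ^ 2)))))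
      atTop (nhds (∫ β : ℝ, f β)) := by
    apply tendsto_integral_of_dominated_convergence (fun β => Real.exp c * |f β|) ?_ hint
    · intro n
      filter_upwards with β
      have h1 : 0 ≤ β ^ 2 / (β ^ 2 + (ε n) ^ 2) := by positivity
      have h2 : Real.exp (-c * (β ^ 2 / (β ^ 2 + (ε n) ^ 2))) ≤ 1 := by
        rw [Real.exp_le_one_iff]
        nlinarith
      have h3 : 0 < Real.exp (-c * (β ^ 2 / (β ^ 2 + (ε n) ^ 2))) := Real.exp_pos _
      rw [Real.norm_eq_abs, abs_mul, abs_mul, abs_of_pos (Real.exp_pos c), abs_of_pos h3]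
      have := mul_le_of_le_one_right (abs_nonneg (f β)) h2
      nlinarith [Real.exp_pos c, abs_nonneg (f β)]
    · have h0 : ∀ᵐ β : ℝ, β ≠ 0 := by
        rw [ae_iff]
        simp [measure_singleton]
      filter_upwards [h0] with β hβ
      have hβ2 : (0:ℝ) < β ^ 2 := by positivity
      have hden : Tendsto (fun n => β ^ 2 + (ε n) ^ 2) atTop (nhds (β ^ 2)) := by
        have : Tendsto (fun n => (ε n) ^ 2) atTop (nhds 0) := by
          simpa using (hε.pow 2)
        simpa using (tendsto_const_nhds.add this)
      have hquot : Tendsto (fun n => β ^ 2 / (β ^ 2 + (ε n) ^ 2)) atTop (nhds 1) := by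
        have := (tendsto_const_nhds (x := β ^ 2) (f := atTop)).div hden hβ2.ne'
        rw [div_self hβ2.ne'] at this
        exact this
      have hexp : Tendsto (fun n => Real.exp (-c * (β ^ 2 / (β ^ 2 + (ε n) ^ 2)))) atTop
          (nhds (Real.exp (-c))) := by
        have := (tendsto_const_nhds (x := -c) (f := atTop)).mul hquot
        refine Real.continuous_exp.continuousAt.tendsto.comp ?_
        simpa using this
      have := (tendsto_const_nhds (x := Real.exp c * f β) (f := atTop)).mul hexp
      have heq : Real.exp c * f β * Real.exp (-c) = f β := by
        rw [mul_comm (Real.exp c) (f β), mul_assoc, ← Real.exp_add]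
        simp
      simpa [mul_assoc, heq] using this
    · -- measurability
      intro n
      have hen := hε_pos n
      have hden : Continuous fun β : ℝ => β ^ 2 + ε n ^ 2 := by continuity
      have hcont : Continuous fun β : ℝ => Real.exp (-c * (β ^ 2 / (β ^ 2 + ε n ^ 2))) :=
        Real.continuous_exp.comp (continuous_const.mul ((continuous_pow 2).div hden
          (fun β => by positivity)))
      exact (continuous_const.mul (hf.mul hcont)).aestronglyMeasurable
  have : ∀ n, Real.exp c * ∫ β : ℝ, f β * Real.exp (-c * (β ^ 2 / (β ^ 2 + (ε n) ^ 2)))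
      = ∫ β : ℝ, Real.exp c * (f β * Real.exp (-c * (β ^ 2 / (β ^ 2 + (ε n) ^ 2)))) := by
    intro n
    rw [integral_const_mul]
  simpa only [this] using key
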